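/- Suppose 1 < α_cs/α_ls < β_cs/β_ls, and let Θ_c = α_sa(1 - α_cs/α_ls)/(β_ls(α_cs/α_ls - β_cs/β_ls)) > 0. Then 𝒩₁(Θ) < 𝒩₂(Θ) for all 0 < Θ < Θ_c, and 𝒩₁(Θ) > 𝒩₂(Θ) for all Θ > Θ_c. -/

import Mathlib

lemma stmt16_key (ρ η₁ ξ₁ η₂ ξ₂ Θc : ℝ) (hρ : 0 < ρ)
    (hξ₁ : 0 < ξ₁) (hξ₂ : 0 < ξ₂)
    (hslope : 0 < η₁ * ξ₂ - η₂ * ξ₁)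
    (hroot : η₁ - η₂ + (η₁ * ξ₂ - η₂ * ξ₁) * Θc = 0) :
    (∀ Θ : ℝ, 0 < Θ → Θ < Θc →
      Θ / ρ + Θ * η₁ / (ρ * (1 + ξ₁ * Θ)) < Θ / ρ + Θ * η₂ / (ρ * (1 + ξ₂ * Θ))) ∧
    (∀ Θ : ℝ, 0 < Θ → Θc < Θ →
      Θ / ρ + Θ * η₂ / (ρ * (1 + ξ₂ * Θ)) < Θ / ρ + Θ * η₁ / (ρ * (1 + ξ₁ * Θ))) := by
  constructor
  · intro Θ hΘ hlt
    have h1 : 0 < ρ * (1 + ξ₁ * Θ) := by positivity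
    have h2 : 0 < ρ * (1 + ξ₂ * Θ) := by positivity
    have hs : 0 < ρ * Θ * ((η₁ * ξ₂ - η₂ * ξ₁) * (Θc - Θ)) :=
      mul_pos (mul_pos hρ hΘ) (mul_pos hslope (by linarith))
    have e2 : ρ * Θ * (η₁ - η₂ + (η₁ * ξ₂ - η₂ * ξ₁) * Θc) = 0 := by rw [hroot]; ring
    have : Θ * η₁ / (ρ * (1 + ξ₁ * Θ)) < Θ * η₂ / (ρ * (1 + ξ₂ * Θ)) := by
      rw [div_lt_div_iff₀ h1 h2]
      nlinarith [hs, e2]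
    linarith
  · intro Θ hΘ hlt
    have h1 : 0 < ρ * (1 + ξ₁ * Θ) := by positivity
    have h2 : 0 < ρ * (1 + ξ₂ * Θ) := by positivity
    have hs : 0 < ρ * Θ * ((η₁ * ξ₂ - η₂ * ξ₁) * (Θ - Θc)) :=
      mul_pos (mul_pos hρ hΘ) (mul_pos hslope (by linarith))
    have e2 : ρ * Θ * (η₁ - η₂ + (η₁ * ξ₂ - η₂ * ξ₁) * Θc) = 0 := by rw [hroot]; ring
    have : Θ * η₂ / (ρ * (1 + ξ₂ * Θ)) < Θ * η₁ / (ρ * (1 + ξ₁ * Θ)) := by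
      rw [div_lt_div_iff₀ h2 h1]
      nlinarith [hs, e2]
    linarith

set_option maxHeartbeats 2000000 in
theorem stmt16_switch_c
    (asa aas aal alc als acs bls bcs ρ : ℝ)
    (hasa : 0 < asa) (haas : 0 < aas) (haal : 0 < aal) (halc : 0 < alc)
    (hals : 0 < als) (hacs : 0 < acs) (hbls : 0 < bls) (hbcs : 0 < bcs)
    (hρ : 0 < ρ) (hρ1 : ρ < 1)
    (hcond1 : 1 < acs / als) (hcond2 : acs / als < bcs / bls) :
    let η₁ := 1 / ((asa / (aas + aal)) * (1 + aal / als))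
    let ξ₁ := (aal * bls / (als * (aas + aal))) * (1 / ((asa / (aas + aal)) * (1 + aal / als)))
    let D := 1 + aal / (als + alc) + aal * alc / ((als + alc) * acs)
    let η₂ := (aas + aal) / (asa * D)
    let ξ₂ := (bls * aal / (alc + als) + bcs * aal * alc / (acs * (alc + als))) / (asa * D)
    let N₁ := fun Θ : ℝ => Θ / ρ + Θ * η₁ / (ρ * (1 + ξ₁ * Θ))
    let N₂ := fun Θ : ℝ => Θ / ρ + Θ * η₂ / (ρ * (1 + ξ₂ * Θ))
    0 < asa * (1 - acs / als) / (bls * (acs / als - bcs / bls)) ∧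
    (∀ Θ : ℝ, 0 < Θ → Θ < asa * (1 - acs / als) / (bls * (acs / als - bcs / bls)) → N₁ Θ < N₂ Θ) ∧
    (∀ Θ : ℝ, asa * (1 - acs / als) / (bls * (acs / als - bcs / bls)) < Θ → N₂ Θ < N₁ Θ) := by
  intro η₁ ξ₁ D η₂ ξ₂ N₁ N₂
  have hη₁ : η₁ = 1 / ((asa / (aas + aal)) * (1 + aal / als)) := rfl
  have hξ₁ : ξ₁ = (aal * bls / (als * (aas + aal))) * (1 / ((asa / (aas + aal)) * (1 + aal / als))) := rfl
  have hD : D = 1 + aal / (als + alc) + aal * alc / ((als + alc) * acs) := rfl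
  have hη₂ : η₂ = (aas + aal) / (asa * D) := rfl
  have hξ₂ : ξ₂ = (bls * aal / (alc + als) + bcs * aal * alc / (acs * (alc + als))) / (asa * D) := rfl
  clear_value η₁ ξ₁ D η₂ ξ₂
  have hac : als < acs := by
    have := (one_lt_div hals).mp hcond1; linarith
  have hbc : acs * bls < bcs * als := by
    rw [div_lt_div_iff₀ hals hbls] at hcond2; linarith
  have h1 : als ≠ 0 := hals.ne'
  have h2 : bls ≠ 0 := hbls.ne'
  have h3 : acs ≠ 0 := hacs.ne'
  have h4 : asa ≠ 0 := hasa.ne'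
  have h5 : aas + aal ≠ 0 := by positivity
  have h6 : als + aal ≠ 0 := by positivity
  have h7 : als + alc ≠ 0 := by positivity
  have h8 : alc + als ≠ 0 := by positivity
  have h10 : bcs * als - acs * bls ≠ 0 := (by linarith : (0:ℝ) < bcs * als - acs * bls).ne'
  have h9 : acs / als - bcs / bls ≠ 0 := by
    have : acs / als - bcs / bls < 0 := by
      rw [sub_neg, div_lt_div_iff₀ hals hbls]; linarith
    exact this.ne
  have h11 : als * acs * bls ^ 2 - als ^ 2 * bls * bcs ≠ 0 := by
    have h12 : als * bls * (acs * bls) < als * bls * (bcs * als) :=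
      mul_lt_mul_of_pos_left hbc (mul_pos hals hbls)
    have : als * acs * bls ^ 2 - als ^ 2 * bls * bcs < 0 := by nlinarith [h12]
    exact this.ne
  have hΘceq : asa * (1 - acs / als) / (bls * (acs / als - bcs / bls))
      = asa * (acs - als) / (bcs * als - acs * bls) := by
    rw [div_eq_div_iff (mul_ne_zero h2 h9) h10]
    field_simp
    ring
  have hΘcpos : 0 < asa * (1 - acs / als) / (bls * (acs / als - bcs / bls)) := by
    rw [hΘceq]
    exact div_pos (mul_pos hasa (by linarith)) (by linarith)
  have hDpos : 0 < D := by rw [hD]; positivity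
  have hξ₁pos : 0 < ξ₁ := by rw [hξ₁]; positivity
  have hξ₂pos : 0 < ξ₂ := by rw [hξ₂, hD]; positivity
  have hslope : 0 < η₁ * ξ₂ - η₂ * ξ₁ := by
    have key : η₁ * ξ₂ - η₂ * ξ₁
        = (aas + aal) * aal * alc * (bcs * als - acs * bls)
          / (asa ^ 2 * D * (als + aal) * acs * (als + alc)) := by
      rw [hη₁, hξ₁, hη₂, hξ₂, hD]
      field_simp
      ring
    rw [key]
    have hnum : 0 < (aas + aal) * aal * alc * (bcs * als - acs * bls) := by
      have : 0 < bcs * als - acs * bls := by linarith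
      positivity
    positivity
  have hroot : η₁ - η₂ + (η₁ * ξ₂ - η₂ * ξ₁)
      * (asa * (1 - acs / als) / (bls * (acs / als - bcs / bls))) = 0 := by
    rw [hΘceq, hη₁, hξ₁, hη₂, hξ₂, hD]
    have h10' : als * bcs - acs * bls ≠ 0 := by rw [mul_comm als bcs]; exact h10
    field_simp
    ring
  obtain ⟨k1, k2⟩ := stmt16_key ρ η₁ ξ₁ η₂ ξ₂
    (asa * (1 - acs / als) / (bls * (acs / als - bcs / bls))) hρ hξ₁pos hξ₂pos hslope hroot
  exact ⟨hΘcpos, fun Θ hΘ hlt => k1 Θ hΘ hlt, fun Θ hlt => k2 Θ (hΘcpos.trans hlt) hlt⟩
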